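/- A graph G is 1-γ_SMB-critical if and only if G is isomorphic to 2K_1 (two isolated vertices) or to K_n ∪ 2K_1 for some n ≥ 1 (the disjoint union of a complete graph on n vertices and two isolated vertices). -/

import Mathlib

/-!
Maker–Breaker domination game.  The players Dominator and Staller alternately select
previously unselected vertices of a graph `G`.  Dominator wins if at some point his selected
vertices form a dominating set of `G`; Staller wins if she selects all vertices of the closed
neighbourhood of some vertex.  Below, `D` always denotes the set of vertices selected by
Dominator so far and `S` the set selected by Staller.
-/

namespace MBD

variable {V : Type*}

/-- `D` is a dominating set of `G`. -/
def IsDomSet (G : SimpleGraph V) (D : Set V) : Prop :=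
  ∀ v, v ∈ D ∨ ∃ u ∈ D, G.Adj u v

/-- Dominator is to move.  `DWin G k D S` says that Dominator has a strategy guaranteeing
that his selected set becomes a dominating set of `G` after at most `k` further moves of his
(the game ends when all vertices have been selected). -/
def DWin (G : SimpleGraph V) : ℕ → Set V → Set V → Prop
  | 0, D, _ => IsDomSet G D
  | (k+1), D, S => IsDomSet G D ∨
      ∃ v ∉ D ∪ S,
        (IsDomSet G (insert v D) ∨
          ((∃ w, w ∉ insert v D ∪ S) ∧
            ∀ w ∉ insert v D ∪ S, DWin G k (insert v D) (insert w S)))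

/-- Staller is to move, and Dominator can win using at most `k` further moves of his. -/
def DWinS (G : SimpleGraph V) (k : ℕ) (D S : Set V) : Prop :=
  IsDomSet G D ∨
    ((∃ w, w ∉ D ∪ S) ∧ ∀ w ∉ D ∪ S, DWin G k D (insert w S))

/-- The Maker–Breaker domination number `γ_MB` of `G`: the least `k` such that Dominator,
moving first (D-game), can win within at most `k` of his moves; `∞` if he cannot win. -/
noncomputable def gammaMB (G : SimpleGraph V) : ℕ∞ :=
  sInf (Nat.cast '' {k : ℕ | DWin G k ∅ ∅})

/-- The Maker–Breaker domination number `γ'_MB` of `G`: the least `k` such that Dominator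
can win within at most `k` of his moves in the S-game (Staller moves first); `∞` if he
cannot win. -/
noncomputable def gammaMB' (G : SimpleGraph V) : ℕ∞ :=
  sInf (Nat.cast '' {k : ℕ | DWinS G k ∅ ∅})

/-- Staller has won: she has selected all vertices of the closed neighbourhood `N[v]`
of some vertex `v`. -/
def IsStallerWin (G : SimpleGraph V) (S : Set V) : Prop :=
  ∃ v, v ∈ S ∧ ∀ u, G.Adj v u → u ∈ S

/-- Staller is to move.  `SWin G k D S` says Staller has a strategy to win using at most `k`
further moves of hers. -/
def SWin (G : SimpleGraph V) : ℕ → Set V → Set V → Prop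
  | 0, _, S => IsStallerWin G S
  | (k+1), D, S => IsStallerWin G S ∨
      ∃ v ∉ D ∪ S,
        (IsStallerWin G (insert v S) ∨
          ((∃ w, w ∉ D ∪ insert v S) ∧
            ∀ w ∉ D ∪ insert v S, SWin G k (insert w D) (insert v S)))

/-- Dominator is to move, and Staller can win within at most `k` further moves of hers. -/
def SWinD (G : SimpleGraph V) (k : ℕ) (D S : Set V) : Prop :=
  IsStallerWin G S ∨
    ((∃ w, w ∉ D ∪ S) ∧ ∀ w ∉ D ∪ S, SWin G k (insert w D) S)

/-- The Staller-Maker–Breaker domination number `γ_SMB` of `G`: the least `k` such that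
Staller can win within at most `k` of her moves in the D-game (Dominator starts);
`∞` if she cannot win. -/
noncomputable def gammaSMB (G : SimpleGraph V) : ℕ∞ :=
  sInf (Nat.cast '' {k : ℕ | SWinD G k ∅ ∅})

/-- The Staller-Maker–Breaker domination number `γ'_SMB` of `G`: the least `k` such that
Staller can win within at most `k` of her moves in the S-game (Staller starts);
`∞` if she cannot win. -/
noncomputable def gammaSMB' (G : SimpleGraph V) : ℕ∞ :=
  sInf (Nat.cast '' {k : ℕ | SWin G k ∅ ∅})

end MBD

open MBD

/-- The disjoint union `K_n ∪ 2K₁` of a complete graph on `n` vertices and two isolated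
vertices. -/
def KnUnionTwoK1 (n : ℕ) : SimpleGraph (Fin n ⊕ Fin 2) :=
  SimpleGraph.fromRel (fun a b => a.isLeft = true ∧ b.isLeft = true)


namespace MBD
variable {V : Type*}

def Isol (G : SimpleGraph V) (v : V) : Prop := ∀ u, ¬ G.Adj v u

lemma not_isStallerWin_empty (G : SimpleGraph V) : ¬ IsStallerWin G ∅ := by
  rintro ⟨v, h, -⟩; exact h

lemma isStallerWin_singleton (G : SimpleGraph V) (v : V) :
    IsStallerWin G {v} ↔ Isol G v := by
  constructor
  · rintro ⟨w, hw, h⟩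
    rcases hw with rfl
    intro u hadj
    rcases h u hadj with rfl
    exact G.irrefl hadj
  · intro h
    exact ⟨v, rfl, fun u hadj => absurd hadj (h u)⟩

lemma not_swinD_zero (G : SimpleGraph V) : ¬ SWinD G 0 ∅ ∅ := by
  rintro (h | ⟨⟨w, -⟩, h⟩)
  · exact not_isStallerWin_empty G h
  · exact not_isStallerWin_empty G (h w (by simp))

lemma swin_one (G : SimpleGraph V) (w : V) :
    SWin G 1 {w} ∅ ↔ ∃ v, v ≠ w ∧ Isol G v := by
  show (IsStallerWin G ∅ ∨ _) ↔ _
  constructor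
  · rintro (h | ⟨v, hv, h⟩)
    · exact absurd h (not_isStallerWin_empty G)
    · have hvw : v ≠ w := by simpa using hv
      refine ⟨v, hvw, ?_⟩
      rcases h with h | ⟨⟨w', hw'⟩, h⟩
      · rw [show (insert v (∅ : Set V)) = {v} by simp, isStallerWin_singleton] at h
        exact h
      · have := h w' hw'
        rw [show (insert v (∅ : Set V)) = {v} by simp] at this
        exact (isStallerWin_singleton G v).mp this
  · rintro ⟨v, hvw, hv⟩
    right
    refine ⟨v, by simpa using hvw, Or.inl ?_⟩
    rw [show (insert v (∅ : Set V)) = {v} by simp, isStallerWin_singleton]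
    exact hv

lemma swinD_one (G : SimpleGraph V) :
    SWinD G 1 ∅ ∅ ↔ ∃ a b, a ≠ b ∧ Isol G a ∧ Isol G b := by
  constructor
  · rintro (h | ⟨⟨w, -⟩, h⟩)
    · exact absurd h (not_isStallerWin_empty G)
    · have h' : ∀ w : V, SWin G 1 {w} ∅ := by
        intro w'
        have := h w' (by simp)
        simpa using this
      obtain ⟨v, hvw, hv⟩ := (swin_one G w).mp (h' w)
      obtain ⟨v', hv'w, hv'⟩ := (swin_one G v).mp (h' v)
      exact ⟨v', v, hv'w, hv', hv⟩
  · rintro ⟨a, b, hab, ha, hb⟩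
    right
    refine ⟨⟨a, by simp⟩, fun w _ => ?_⟩
    have : insert w (∅ : Set V) = {w} := by simp
    rw [this, swin_one]
    by_cases hwa : a = w
    · exact ⟨b, by rw [← hwa]; exact fun h => hab h.symm, hb⟩
    · exact ⟨a, fun h => hwa h, ha⟩


lemma gammaSMB_eq_one_iff (G : SimpleGraph V) : gammaSMB G = 1 ↔ SWinD G 1 ∅ ∅ := by
  set s : Set ℕ := {k | SWinD G k ∅ ∅} with hs
  have h0 : 0 ∉ s := not_swinD_zero G
  show sInf (Nat.cast '' s : Set ℕ∞) = 1 ↔ 1 ∈ s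
  constructor
  · intro h
    have h2 : sInf (Nat.cast '' s : Set ℕ∞) < 2 := by rw [h]; norm_num
    rw [sInf_lt_iff] at h2
    obtain ⟨x, ⟨k, hk, rfl⟩, hx2⟩ := h2
    have : k < 2 := by exact_mod_cast hx2
    interval_cases k
    · exact absurd hk h0
    · exact hk
  · intro h
    apply le_antisymm
    · exact sInf_le ⟨1, h, by norm_num⟩
    · apply le_sInf
      rintro x ⟨k, hk, rfl⟩
      have : k ≠ 0 := fun e => h0 (e ▸ hk)
      exact_mod_cast Nat.one_le_iff_ne_zero.mpr this

lemma one_lt_gammaSMB_iff (G : SimpleGraph V) : 1 < gammaSMB G ↔ ¬ SWinD G 1 ∅ ∅ := by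
  set s : Set ℕ := {k | SWinD G k ∅ ∅} with hs
  have h0 : 0 ∉ s := not_swinD_zero G
  show 1 < sInf (Nat.cast '' s : Set ℕ∞) ↔ 1 ∉ s
  constructor
  · intro h h1
    have hm : ((1:ℕ):ℕ∞) ∈ (Nat.cast '' s : Set ℕ∞) := Set.mem_image_of_mem _ h1
    have h2 := sInf_le hm
    rw [Nat.cast_one] at h2
    exact absurd h2 (not_le_of_gt h)
  · intro h1
    have h2 : (2:ℕ∞) ≤ sInf (Nat.cast '' s) := by
      apply le_sInf
      rintro x ⟨k, hk, rfl⟩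
      have hk2 : 2 ≤ k := by
        rcases Nat.lt_or_ge k 2 with hlt | hge
        · interval_cases k
          · exact absurd hk h0
          · exact absurd hk h1
        · exact hge
      exact_mod_cast hk2
    exact lt_of_lt_of_le (by norm_num) h2

lemma isol_sup (G : SimpleGraph V) {u v : V} (huv : u ≠ v) (w : V) :
    Isol (G ⊔ SimpleGraph.fromEdgeSet {s(u,v)}) w ↔ Isol G w ∧ w ≠ u ∧ w ≠ v := by
  constructor
  · intro h
    refine ⟨fun x hx => h x (Or.inl hx), ?_, ?_⟩
    · rintro rfl
      exact h v (Or.inr (by rw [SimpleGraph.fromEdgeSet_adj]; exact ⟨by simp, huv⟩))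
    · rintro rfl
      exact h u (Or.inr (by
        rw [SimpleGraph.fromEdgeSet_adj]
        exact ⟨by simp [Sym2.eq_swap], huv.symm⟩))
  · rintro ⟨h, hwu, hwv⟩ x hx
    rcases hx with hx | hx
    · exact h x hx
    · rw [SimpleGraph.fromEdgeSet_adj] at hx
      obtain ⟨hm, hne⟩ := hx
      simp only [Set.mem_singleton_iff, Sym2.eq_iff] at hm
      rcases hm with ⟨rfl, rfl⟩ | ⟨rfl, rfl⟩
      · exact hwu rfl
      · exact hwv rfl

end MBD


namespace MBD
variable {V : Type*}

lemma knu_adj (n : ℕ) (x y : Fin n ⊕ Fin 2) :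
    (KnUnionTwoK1 n).Adj x y ↔ x ≠ y ∧ x.isLeft = true ∧ y.isLeft = true := by
  simp only [KnUnionTwoK1, SimpleGraph.fromRel_adj]
  tauto

lemma four_ne {α : Type*} [Fintype α] (h : Fintype.card α ≤ 3) {a b c d : α}
    (h1 : a ≠ b) (h2 : a ≠ c) (h3 : a ≠ d) (h4 : b ≠ c) (h5 : b ≠ d) (h6 : c ≠ d) :
    False := by
  classical
  have hcard : ({a, b, c, d} : Finset α).card = 4 := by
    rw [Finset.card_insert_of_notMem (by simp [h1, h2, h3]),
      Finset.card_insert_of_notMem (by simp [h4, h5]),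
      Finset.card_insert_of_notMem (by simp [h6]), Finset.card_singleton]
  have := Finset.card_le_univ ({a, b, c, d} : Finset α)
  rw [hcard] at this
  have := Finset.card_univ (α := α) ▸ this
  omega

theorem crit_iff [Fintype V] (G : SimpleGraph V) :
    ((∃ a b : V, a ≠ b ∧ Isol G a ∧ Isol G b) ∧
      ∀ u v : V, u ≠ v → ¬ G.Adj u v →
        ¬ ∃ a b : V, a ≠ b ∧ a ≠ u ∧ a ≠ v ∧ b ≠ u ∧ b ≠ v ∧ Isol G a ∧ Isol G b) ↔
    (Nonempty (G ≃g (⊥ : SimpleGraph (Fin 2))) ∨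
      ∃ n : ℕ, 1 ≤ n ∧ Nonempty (G ≃g KnUnionTwoK1 n)) := by
  classical
  constructor
  · rintro ⟨⟨a, b, hab, ha, hb⟩, hcrit⟩
    by_cases hall : ∀ v, Isol G v
    · have hGbot : ∀ u v : V, ¬ G.Adj u v := fun u v h => hall u v h
      have hsmall : ∀ x y : V, x ≠ a → x ≠ b → y ≠ a → y ≠ b → x = y := by
        intro x y hxa hxb hya hyb
        by_contra hxy
        exact hcrit a b hab (hGbot a b) ⟨x, y, hxy, hxa, hxb, hya, hyb, hall x, hall y⟩
      by_cases hex : ∃ x : V, x ≠ a ∧ x ≠ b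
      · obtain ⟨c, hca, hcb⟩ := hex
        have huniv : (Finset.univ : Finset V) = {a, b, c} := by
          apply Finset.eq_of_subset_of_card_le ?sub ?le |>.symm
          case sub => exact Finset.subset_univ _
          case le =>
            apply Finset.card_le_card
            intro z _
            by_cases hza : z = a
            · simp [hza]
            · by_cases hzb : z = b
              · simp [hzb]
              · have := hsmall z c hza hzb hca hcb
                simp [this]
        have hcard3 : Fintype.card V = 3 := by
          rw [← Finset.card_univ, huniv,
            Finset.card_insert_of_notMem (by simp [hab, Ne.symm hca]),
            Finset.card_insert_of_notMem (by simp [Ne.symm hcb]), Finset.card_singleton]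
        have e : V ≃ Fin 1 ⊕ Fin 2 := Fintype.equivOfCardEq (by simp [hcard3])
        refine Or.inr ⟨1, le_refl 1, ⟨⟨e, ?_⟩⟩⟩
        intro x y
        rw [knu_adj]
        constructor
        · rintro ⟨hne, hl1, hl2⟩
          obtain ⟨i, hi⟩ := Sum.isLeft_iff.mp hl1
          obtain ⟨j, hj⟩ := Sum.isLeft_iff.mp hl2
          exact absurd (by rw [hi, hj, Subsingleton.elim i j]) hne
        · intro h
          exact absurd h (hGbot x y)
      · push_neg at hex
        have hcard2 : Fintype.card V = 2 := by
          rw [← Finset.card_univ]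
          rw [show (Finset.univ : Finset V) = {a, b} from ?_]
          · rw [Finset.card_insert_of_notMem (by simp [hab]), Finset.card_singleton]
          · apply Finset.eq_of_subset_of_card_le (Finset.subset_univ _) ?_ |>.symm
            apply Finset.card_le_card
            intro z _
            by_cases hza : z = a
            · simp [hza]
            · simp [hex z hza]
        have e : V ≃ Fin 2 := Fintype.equivFinOfCardEq hcard2
        exact Or.inl ⟨⟨e, by intro x y; simp [hGbot x y]⟩⟩
    · push_neg at hall
      obtain ⟨c, hc⟩ := hall
      have hIsol_iff : ∀ w, Isol G w → (w = a ∨ w = b) := by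
        intro w hw
        by_contra hne
        push_neg at hne
        have hca : c ≠ a := fun e => hc (e ▸ ha)
        have hcb : c ≠ b := fun e => hc (e ▸ hb)
        have hnadj : ¬ G.Adj c a := fun h => ha c (G.adj_symm h)
        exact hcrit c a hca hnadj
          ⟨w, b, hne.2, fun h => hc (h ▸ hw), hne.1, fun h => hc (h ▸ hb),
            Ne.symm hab, hw, hb⟩
      have hAdj : ∀ x y, G.Adj x y ↔ x ≠ y ∧ ¬ Isol G x ∧ ¬ Isol G y := by
        intro x y
        constructor
        · intro h
          exact ⟨G.ne_of_adj h, fun hi => hi y h, fun hi => hi x (G.adj_symm h)⟩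
        · rintro ⟨h1, h2, h3⟩
          by_contra hnadj
          refine hcrit x y h1 hnadj ⟨a, b, hab, ?_, ?_, ?_, ?_, ha, hb⟩
          · exact fun e => h2 (e ▸ ha)
          · exact fun e => h3 (e ▸ ha)
          · exact fun e => h2 (e ▸ hb)
          · exact fun e => h3 (e ▸ hb)
      set n := Fintype.card {v // ¬ Isol G v} with hn
      have hn1 : 1 ≤ n := Fintype.card_pos_iff.mpr ⟨⟨c, hc⟩⟩
      have hcard2 : Fintype.card {v // Isol G v} = 2 := by
        rw [← Nat.card_eq_fintype_card, Nat.card_eq_two_iff]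
        refine ⟨⟨a, ha⟩, ⟨b, hb⟩, by simpa using hab, ?_⟩
        ext ⟨z, hz⟩
        simp only [Set.mem_insert_iff, Set.mem_singleton_iff, Set.mem_univ, iff_true]
        rcases hIsol_iff z hz with rfl | rfl
        · left; rfl
        · right; rfl
      let e : V ≃ Fin n ⊕ Fin 2 :=
        ((Equiv.sumCompl (fun v => Isol G v)).symm.trans
          ((Equiv.sumComm _ _).trans
            (Equiv.sumCongr (Fintype.equivFinOfCardEq rfl) (Fintype.equivFinOfCardEq hcard2))))
      have hleft : ∀ v, ((e v).isLeft = true ↔ ¬ Isol G v) := by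
        intro v
        by_cases hv : Isol G v
        · have h1 : (Equiv.sumCompl (fun v => Isol G v)).symm v = Sum.inl ⟨v, hv⟩ :=
            Equiv.sumCompl_symm_apply_of_pos hv
          simp [e, h1, hv]
        · have h1 : (Equiv.sumCompl (fun v => Isol G v)).symm v = Sum.inr ⟨v, hv⟩ :=
            Equiv.sumCompl_symm_apply_of_neg hv
          simp [e, h1, hv]
      refine Or.inr ⟨n, hn1, ⟨⟨e, ?_⟩⟩⟩
      intro x y
      rw [knu_adj, hAdj]
      simp only [ne_eq, EmbeddingLike.apply_eq_iff_eq, hleft]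
  · rintro (hf | ⟨n, hn, hf⟩)
    · obtain ⟨f⟩ := hf
      have hGbot : ∀ u v : V, ¬ G.Adj u v := by
        intro u v h
        have := f.map_adj_iff.mpr h
        simp at this
      have hall : ∀ v, Isol G v := fun v u => hGbot v u
      have hinj : Function.Injective f := f.toEquiv.injective
      refine ⟨⟨f.symm 0, f.symm 1, ?_, hall _, hall _⟩, ?_⟩
      · intro h
        have := f.symm.toEquiv.injective h
        simp at this
      · rintro u v huv - ⟨x, y, hxy, hxu, hxv, hyu, hyv, -, -⟩
        have d1 : (f x).1 ≠ (f y).1 := fun h => hxy (hinj (Fin.val_injective h))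
        have d2 : (f x).1 ≠ (f u).1 := fun h => hxu (hinj (Fin.val_injective h))
        have d3 : (f y).1 ≠ (f u).1 := fun h => hyu (hinj (Fin.val_injective h))
        have l1 := (f x).isLt
        have l2 := (f y).isLt
        have l3 := (f u).isLt
        omega
    · obtain ⟨f⟩ := hf
      have hinj : Function.Injective f := f.toEquiv.injective
      have hinrIsol : ∀ j : Fin 2, Isol G (f.symm (Sum.inr j)) := by
        intro j u hadj
        have : (KnUnionTwoK1 n).Adj (f (f.symm (Sum.inr j))) (f u) := f.map_adj_iff.mpr hadj
        rw [f.apply_symm_apply] at this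
        rw [knu_adj] at this
        simp at this
      refine ⟨⟨f.symm (Sum.inr 0), f.symm (Sum.inr 1), ?_, hinrIsol 0, hinrIsol 1⟩, ?_⟩
      · intro h
        have := f.symm.toEquiv.injective h
        simp at this
      · rintro u v huv hnadj ⟨x, y, hxy, hxu, hxv, hyu, hyv, hx, hy⟩
        have hmodel : ∀ w z : V, ¬ G.Adj w z → ¬ (KnUnionTwoK1 n).Adj (f w) (f z) :=
          fun w z h hm => h (f.map_adj_iff.mp hm)
        have hxm : ∀ z : Fin n ⊕ Fin 2, ¬ (KnUnionTwoK1 n).Adj (f x) z := by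
          intro z hz
          have : (KnUnionTwoK1 n).Adj (f x) (f (f.symm z)) := by
            rwa [f.apply_symm_apply]
          exact hx _ (f.map_adj_iff.mp this)
        have hym : ∀ z : Fin n ⊕ Fin 2, ¬ (KnUnionTwoK1 n).Adj (f y) z := by
          intro z hz
          have : (KnUnionTwoK1 n).Adj (f y) (f (f.symm z)) := by
            rwa [f.apply_symm_apply]
          exact hy _ (f.map_adj_iff.mp this)
        by_cases hn1 : n = 1
        · subst hn1
          have hcard3 : Fintype.card V = 3 := by
            rw [Fintype.card_congr f.toEquiv]
            simp
          exact four_ne (le_of_eq hcard3) hxy hxu hxv hyu hyv huv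
        · have hn2 : 2 ≤ n := by omega
          have hinr : ∀ w : Fin n ⊕ Fin 2, (∀ z, ¬ (KnUnionTwoK1 n).Adj w z) →
              ∃ i : Fin 2, w = Sum.inr i := by
            rintro (i | i) hw
            · obtain ⟨j, hj⟩ : ∃ j : Fin n, j ≠ i :=
                Fintype.exists_ne_of_one_lt_card (by simp; omega) i
              exact absurd ((knu_adj n _ _).mpr ⟨fun h => hj (Sum.inl.inj h).symm, by simp, by simp⟩) (hw (Sum.inl j))
            · exact ⟨i, rfl⟩
          obtain ⟨i, hi⟩ := hinr _ hxm
          obtain ⟨j, hj⟩ := hinr _ hym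
          have hij : i ≠ j := by
            intro h
            exact hxy (hinj (by rw [hi, hj, h]))
          have hone : ¬ ((f u).isLeft = true ∧ (f v).isLeft = true) := by
            rintro ⟨h1, h2⟩
            exact hmodel u v hnadj ((knu_adj n _ _).mpr
              ⟨fun h => huv (hinj h), h1, h2⟩)
          have hcase : (∃ k, f u = Sum.inr k) ∨ (∃ k, f v = Sum.inr k) := by
            rcases hfu : f u with k | k
            · rcases hfv : f v with k' | k'
              · exact absurd ⟨by rw [hfu]; rfl, by rw [hfv]; rfl⟩ hone
              · exact Or.inr ⟨k', rfl⟩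
            · exact Or.inl ⟨k, rfl⟩
          have key : ∀ w : V, (∃ k, f w = Sum.inr k) → w = x ∨ w = y := by
            rintro w ⟨k, hk⟩
            have : k = i ∨ k = j := by
              have := k.isLt; have := i.isLt; have := j.isLt
              have : k.1 = i.1 ∨ k.1 = j.1 := by
                have hij' : i.1 ≠ j.1 := fun h => hij (Fin.val_injective h)
                omega
              rcases this with h | h
              · exact Or.inl (Fin.val_injective h)
              · exact Or.inr (Fin.val_injective h)
            rcases this with rfl | rfl
            · exact Or.inl (hinj (by rw [hk, hi]))
            · exact Or.inr (hinj (by rw [hk, hj]))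
          rcases hcase with ⟨k, hk⟩ | ⟨k, hk⟩
          · rcases key u ⟨k, hk⟩ with rfl | rfl
            · exact hxu rfl
            · exact hyu rfl
          · rcases key v ⟨k, hk⟩ with rfl | rfl
            · exact hxv rfl
            · exact hyv rfl


end MBD

/-- A (finite) graph `G` is `1`-`γ_SMB`-critical if and only if `G` is isomorphic to `2K₁`
(two isolated vertices) or to `K_n ∪ 2K₁` for some `n ≥ 1`. -/
theorem one_gammaSMB_critical_iff {V : Type*} [Fintype V] (G : SimpleGraph V) :
    (gammaSMB G = 1 ∧ ∀ u v : V, u ≠ v → ¬ G.Adj u v →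
        gammaSMB G < gammaSMB (G ⊔ SimpleGraph.fromEdgeSet {s(u, v)})) ↔
      (Nonempty (G ≃g (⊥ : SimpleGraph (Fin 2))) ∨
        ∃ n : ℕ, 1 ≤ n ∧ Nonempty (G ≃g KnUnionTwoK1 n)) := by
  classical
  rw [← crit_iff G]
  constructor
  · rintro ⟨h1, h2⟩
    have h1' := (swinD_one G).mp ((gammaSMB_eq_one_iff G).mp h1)
    refine ⟨h1', ?_⟩
    intro u v huv hnadj hex
    have hlt := h2 u v huv hnadj
    rw [h1, one_lt_gammaSMB_iff, swinD_one] at hlt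
    apply hlt
    obtain ⟨a, b, hab, hau, hav, hbu, hbv, ha, hb⟩ := hex
    exact ⟨a, b, hab, (isol_sup G huv a).mpr ⟨ha, hau, hav⟩,
      (isol_sup G huv b).mpr ⟨hb, hbu, hbv⟩⟩
  · rintro ⟨h1, h2⟩
    have hg1 : gammaSMB G = 1 := (gammaSMB_eq_one_iff G).mpr ((swinD_one G).mpr h1)
    refine ⟨hg1, ?_⟩
    intro u v huv hnadj
    rw [hg1, one_lt_gammaSMB_iff, swinD_one]
    rintro ⟨a, b, hab, ha, hb⟩
    rw [isol_sup G huv] at ha hb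
    exact h2 u v huv hnadj ⟨a, b, hab, ha.2.1, ha.2.2, hb.2.1, hb.2.2, ha.1, hb.1⟩
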